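/- For every positive integer n there exist constants 0 < c ≤ C such that for every v ∈ ℝⁿ and every unit vector ν ∈ S^{n−1}: c · min(|v|, 1) ≤ ∫_{S^{n−1}} min(|v·ξ|, 1) · |ν·ξ| dH^{n−1}(ξ) ≤ C · min(|v|, 1). -/

import Mathlib

open MeasureTheory Metric Set
open scoped RealInnerProductSpace ENNReal NNReal

namespace Stmt12Aux

noncomputable section

variable {n : ℕ}

local notation "E" => EuclideanSpace ℝ (Fin n)

lemma abs_coord_le_norm (x : EuclideanSpace ℝ (Fin n)) (j : Fin n) : |x j| ≤ ‖x‖ := by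
  have h := abs_real_inner_le_norm (EuclideanSpace.single j (1:ℝ)) x
  simpa [EuclideanSpace.inner_single_left, EuclideanSpace.norm_single] using h

lemma norm_sq_eq_sum (x : EuclideanSpace ℝ (Fin n)) : ‖x‖ ^ 2 = ∑ j, (x j) ^ 2 := by
  rw [EuclideanSpace.norm_eq, Real.sq_sqrt (by positivity)]
  simp [sq_abs]

lemma mem_sphere_norm {x : EuclideanSpace ℝ (Fin n)} (hx : x ∈ sphere (0:EuclideanSpace ℝ (Fin n)) 1) :
    ‖x‖ = 1 := by
  simpa [mem_sphere_iff_norm] using hx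

/-- Integrability of continuous functions on the sphere, given finiteness of the measure. -/
lemma integrableOn_sphere (hfin : μH[(n:ℝ)-1] (sphere (0:E) 1) < ⊤)
    {f : EuclideanSpace ℝ (Fin n) → ℝ} (hf : Continuous f) :
    IntegrableOn f (sphere (0:E) 1) (μH[(n:ℝ)-1]) := by
  obtain ⟨C, hC⟩ := (isCompact_sphere (0:E) 1).exists_bound_of_continuousOn hf.continuousOn
  refine Integrable.mono' (g := fun _ => C) ?_ (hf.aestronglyMeasurable.restrict) ?_
  · exact integrable_const_iff.2 (Or.inr ⟨by
      rwa [Measure.restrict_apply_univ]⟩)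
  · exact (ae_restrict_iff' isClosed_sphere.measurableSet).2 (ae_of_all _ hC)

/-- Invariance of the sphere integral under a linear isometry. -/
lemma integral_comp_isometry (R : EuclideanSpace ℝ (Fin n) ≃ₗᵢ[ℝ] EuclideanSpace ℝ (Fin n))
    (f : EuclideanSpace ℝ (Fin n) → ℝ) :
    ∫ ξ in sphere (0:E) 1, f (R ξ) ∂(μH[(n:ℝ)-1]) = ∫ ξ in sphere (0:E) 1, f ξ ∂(μH[(n:ℝ)-1]) := by
  have hmp : MeasurePreserving (⇑R) (μH[(n:ℝ)-1] : Measure E) (μH[(n:ℝ)-1]) :=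
    ⟨R.toHomeomorph.measurable, R.toIsometryEquiv.map_hausdorffMeasure _⟩
  have hpre : (⇑R) ⁻¹' (sphere (0:E) 1) = sphere (0:E) 1 := by
    ext ξ
    simp [mem_sphere_iff_norm, R.norm_map]
  have h := hmp.setIntegral_preimage_emb R.toHomeomorph.measurableEmbedding f (sphere (0:E) 1)
  rwa [hpre] at h

/-- An isometry mapping one pair of orthonormal vectors to another. -/
lemma exists_isometry_pair {p q p' q' : EuclideanSpace ℝ (Fin n)}
    (hp : ‖p‖ = 1) (hq : ‖q‖ = 1) (hpq : ⟪p, q⟫ = 0)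
    (hp' : ‖p'‖ = 1) (hq' : ‖q'‖ = 1) (hpq' : ⟪p', q'⟫ = 0) :
    ∃ R : EuclideanSpace ℝ (Fin n) ≃ₗᵢ[ℝ] EuclideanSpace ℝ (Fin n), R p = p' ∧ R q = q' := by
  set R1 := Submodule.reflection (ℝ ∙ (p - p'))ᗮ with hR1
  have h1 : R1 p = p' := Submodule.reflection_sub (by rw [hp, hp'])
  set q1 := R1 q with hq1def
  have hq1 : ‖q1‖ = 1 := by rw [hq1def, R1.norm_map, hq]
  have hq1p' : ⟪q1, p'⟫ = 0 := by
    rw [hq1def, ← h1, R1.inner_map_map, real_inner_comm, hpq]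
  set R2 := Submodule.reflection (ℝ ∙ (q1 - q'))ᗮ with hR2
  have h2 : R2 q1 = q' := Submodule.reflection_sub (by rw [hq1, hq'])
  have h3 : R2 p' = p' := by
    apply Submodule.reflection_mem_subspace_eq_self
    rw [Submodule.mem_orthogonal_singleton_iff_inner_left]
    rw [inner_sub_right, real_inner_comm q1 p', hq1p', hpq', sub_zero]
  exact ⟨R1.trans R2, by simp [LinearIsometryEquiv.trans_apply, h1, h3],
    by simp [LinearIsometryEquiv.trans_apply, ← hq1def, h2]⟩

lemma contInner (w : EuclideanSpace ℝ (Fin n)) :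
    Continuous fun ξ : EuclideanSpace ℝ (Fin n) => (⟪w, ξ⟫ : ℝ) :=
  continuous_const.inner continuous_id

lemma integral_sphere_congr_isometry
    (R : EuclideanSpace ℝ (Fin n) ≃ₗᵢ[ℝ] EuclideanSpace ℝ (Fin n))
    (f g : EuclideanSpace ℝ (Fin n) → ℝ) (h : ∀ ξ, f (R ξ) = g ξ) :
    ∫ ξ in sphere (0:E) 1, g ξ ∂(μH[(n:ℝ)-1]) = ∫ ξ in sphere (0:E) 1, f ξ ∂(μH[(n:ℝ)-1]) := by
  rw [← integral_comp_isometry R f]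
  exact setIntegral_congr_fun isClosed_sphere.measurableSet (fun ξ _ => (h ξ).symm)

lemma integral_inner_pow_eq {u u' : EuclideanSpace ℝ (Fin n)} (hu : ‖u‖ = ‖u'‖) (k : ℕ) :
    ∫ ξ in sphere (0:E) 1, (⟪u, ξ⟫) ^ k ∂(μH[(n:ℝ)-1])
      = ∫ ξ in sphere (0:E) 1, (⟪u', ξ⟫) ^ k ∂(μH[(n:ℝ)-1]) := by
  have hR : (Submodule.reflection (ℝ ∙ (u - u'))ᗮ) u = u' := Submodule.reflection_sub hu
  refine integral_sphere_congr_isometry (Submodule.reflection (ℝ ∙ (u - u'))ᗮ)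
    (fun ξ => (⟪u', ξ⟫) ^ k) (fun ξ => (⟪u, ξ⟫) ^ k) (fun ξ => ?_)
  have h5 := (Submodule.reflection (ℝ ∙ (u - u'))ᗮ).inner_map_map u ξ
  rw [hR] at h5
  simp only [h5]

lemma integral_coord_sq (hn : 0 < n) (hfin : μH[(n:ℝ)-1] (sphere (0:E) 1) < ⊤)
    {u : EuclideanSpace ℝ (Fin n)} (hu1 : ‖u‖ = 1) :
    ∫ ξ in sphere (0:E) 1, (⟪u, ξ⟫) ^ 2 ∂(μH[(n:ℝ)-1])
      = (μH[(n:ℝ)-1] (sphere (0:E) 1)).toReal / n := by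
  have hcont : ∀ w : EuclideanSpace ℝ (Fin n),
      Continuous fun ξ : EuclideanSpace ℝ (Fin n) => (⟪w, ξ⟫) ^ 2 :=
    fun w => (contInner w).pow 2
  have hsingle : ∀ i : Fin n,
      ∫ ξ in sphere (0:E) 1, (⟪u, ξ⟫) ^ 2 ∂(μH[(n:ℝ)-1])
        = ∫ ξ in sphere (0:E) 1, (⟪EuclideanSpace.single i (1:ℝ), ξ⟫) ^ 2 ∂(μH[(n:ℝ)-1]) :=
    fun i => integral_inner_pow_eq (by simp [hu1, EuclideanSpace.norm_single]) 2
  have hsum : ∑ i : Fin n, ∫ ξ in sphere (0:E) 1,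
      (⟪EuclideanSpace.single i (1:ℝ), ξ⟫) ^ 2 ∂(μH[(n:ℝ)-1])
        = (μH[(n:ℝ)-1] (sphere (0:E) 1)).toReal := by
    rw [← integral_finset_sum _ (fun i _ => integrableOn_sphere hfin (hcont _))]
    have heq : ∀ ξ ∈ sphere (0:E) 1,
        ∑ i : Fin n, (⟪EuclideanSpace.single i (1:ℝ), ξ⟫) ^ 2 = 1 := by
      intro ξ hξ
      have : ∀ i : Fin n, ⟪EuclideanSpace.single i (1:ℝ), ξ⟫ = ξ i := by
        intro i; simp [EuclideanSpace.inner_single_left]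
      simp_rw [this]
      rw [← norm_sq_eq_sum, mem_sphere_norm hξ, one_pow]
    rw [setIntegral_congr_fun isClosed_sphere.measurableSet heq]
    simp [setIntegral_const, measureReal_def]
  have hn' : (n:ℝ) ≠ 0 := Nat.cast_ne_zero.2 hn.ne'
  have : (n:ℝ) * ∫ ξ in sphere (0:E) 1, (⟪u, ξ⟫) ^ 2 ∂(μH[(n:ℝ)-1])
      = (μH[(n:ℝ)-1] (sphere (0:E) 1)).toReal := by
    rw [← hsum]
    rw [Finset.sum_congr rfl (fun i _ => (hsingle i).symm), Finset.sum_const]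
    simp [mul_comm]
  rw [eq_div_iff hn']
  linarith [this]

lemma integral_inner_sq (hn : 0 < n) (hfin : μH[(n:ℝ)-1] (sphere (0:E) 1) < ⊤)
    (w : EuclideanSpace ℝ (Fin n)) :
    ∫ ξ in sphere (0:E) 1, (⟪w, ξ⟫) ^ 2 ∂(μH[(n:ℝ)-1])
      = ‖w‖ ^ 2 * ((μH[(n:ℝ)-1] (sphere (0:E) 1)).toReal / n) := by
  by_cases hw : w = 0
  · simp [hw]
  · have hu1 : ‖‖w‖⁻¹ • w‖ = 1 := norm_smul_inv_norm hw
    have hpt : ∀ ξ : EuclideanSpace ℝ (Fin n),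
        (⟪w, ξ⟫) ^ 2 = ‖w‖ ^ 2 * (⟪‖w‖⁻¹ • w, ξ⟫) ^ 2 := by
      intro ξ
      rw [real_inner_smul_left]
      have : ‖w‖ ≠ 0 := norm_ne_zero_iff.2 hw
      field_simp
    simp_rw [hpt]
    rw [integral_const_mul, integral_coord_sq hn hfin hu1]

lemma integral_inner_mul (hn : 0 < n) (hfin : μH[(n:ℝ)-1] (sphere (0:E) 1) < ⊤)
    (a b : EuclideanSpace ℝ (Fin n)) :
    ∫ ξ in sphere (0:E) 1, (⟪a, ξ⟫) * (⟪b, ξ⟫) ∂(μH[(n:ℝ)-1])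
      = ⟪a, b⟫ * ((μH[(n:ℝ)-1] (sphere (0:E) 1)).toReal / n) := by
  have hpt : ∀ ξ : EuclideanSpace ℝ (Fin n),
      (⟪a, ξ⟫) * (⟪b, ξ⟫) = ((⟪a+b, ξ⟫) ^ 2 - (⟪a-b, ξ⟫) ^ 2) / 4 := by
    intro ξ
    rw [inner_add_left, inner_sub_left]
    ring
  simp_rw [hpt]
  have hsub : Integrable (fun ξ : EuclideanSpace ℝ (Fin n) =>
      (⟪a+b, ξ⟫) ^ 2 - (⟪a-b, ξ⟫) ^ 2) ((μH[(n:ℝ)-1]).restrict (sphere (0:E) 1)) := by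
    exact (integrableOn_sphere hfin ((contInner (a+b)).pow 2)).sub
      (integrableOn_sphere hfin ((contInner (a-b)).pow 2))
  rw [integral_div, integral_sub
    (integrableOn_sphere (f := fun ξ => (⟪a+b, ξ⟫) ^ 2) hfin ((contInner (a+b)).pow 2))
    (integrableOn_sphere (f := fun ξ => (⟪a-b, ξ⟫) ^ 2) hfin ((contInner (a-b)).pow 2)),
    integral_inner_sq hn hfin, integral_inner_sq hn hfin]
  have h1 : ‖a + b‖ ^ 2 = ‖a‖ ^ 2 + 2 * ⟪a, b⟫ + ‖b‖ ^ 2 := norm_add_sq_real a b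
  have h2 : ‖a - b‖ ^ 2 = ‖a‖ ^ 2 - 2 * ⟪a, b⟫ + ‖b‖ ^ 2 := norm_sub_sq_real a b
  rw [h1, h2]
  ring

lemma cross_zero (hfin : μH[(n:ℝ)-1] (sphere (0:E) 1) < ⊤)
    {e f : EuclideanSpace ℝ (Fin n)} (hef : ⟪e, f⟫ = 0) (k : ℕ) :
    ∫ ξ in sphere (0:E) 1, (⟪e, ξ⟫) ^ k * (⟪f, ξ⟫) ∂(μH[(n:ℝ)-1]) = 0 := by
  set R := Submodule.reflection (ℝ ∙ f)ᗮ with hRdef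
  have hRf : R f = -f := Submodule.reflection_orthogonalComplement_singleton_eq_neg f
  have hRe : R e = e := by
    apply Submodule.reflection_mem_subspace_eq_self
    rw [Submodule.mem_orthogonal_singleton_iff_inner_left]
    exact hef
  have key : ∀ ξ, (fun ξ => (⟪e, ξ⟫) ^ k * (⟪f, ξ⟫)) (R ξ)
      = -((⟪e, ξ⟫) ^ k * (⟪f, ξ⟫)) := by
    intro ξ
    have h1 : ⟪e, R ξ⟫ = ⟪e, ξ⟫ := by
      conv_lhs => rw [← hRe]
      exact R.inner_map_map e ξ
    have h2 : ⟪f, R ξ⟫ = -⟪f, ξ⟫ := by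
      have h3 := R.inner_map_map f ξ
      rw [hRf, inner_neg_left] at h3
      linarith
    simp only [h1, h2]
    ring
  have h4 := integral_sphere_congr_isometry R (fun ξ => (⟪e, ξ⟫) ^ k * (⟪f, ξ⟫))
    (fun ξ => -((⟪e, ξ⟫) ^ k * (⟪f, ξ⟫))) key
  rw [integral_neg] at h4
  linarith

lemma cauchy_schwarz_integral (hfin : μH[(n:ℝ)-1] (sphere (0:E) 1) < ⊤)
    (hm : 0 < (μH[(n:ℝ)-1] (sphere (0:E) 1)).toReal)
    {g : EuclideanSpace ℝ (Fin n) → ℝ} (hg : Continuous g) :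
    (∫ ξ in sphere (0:E) 1, g ξ ∂(μH[(n:ℝ)-1])) ^ 2
      ≤ (μH[(n:ℝ)-1] (sphere (0:E) 1)).toReal * ∫ ξ in sphere (0:E) 1, (g ξ) ^ 2 ∂(μH[(n:ℝ)-1]) := by
  set m := (μH[(n:ℝ)-1] (sphere (0:E) 1)).toReal with hmdef
  set A := ∫ ξ in sphere (0:E) 1, g ξ ∂(μH[(n:ℝ)-1]) with hA
  set B := ∫ ξ in sphere (0:E) 1, (g ξ) ^ 2 ∂(μH[(n:ℝ)-1]) with hB
  set c := A / m with hc
  have h0 : 0 ≤ ∫ ξ in sphere (0:E) 1, (g ξ - c) ^ 2 ∂(μH[(n:ℝ)-1]) :=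
    setIntegral_nonneg isClosed_sphere.measurableSet (fun ξ _ => sq_nonneg _)
  have hexp : ∫ ξ in sphere (0:E) 1, (g ξ - c) ^ 2 ∂(μH[(n:ℝ)-1])
      = B - 2 * c * A + c ^ 2 * m := by
    have hpt : ∀ ξ : EuclideanSpace ℝ (Fin n),
        (g ξ - c) ^ 2 = g ξ ^ 2 - 2 * c * g ξ + c ^ 2 := by
      intro ξ; ring
    simp_rw [hpt]
    have hint1 : Integrable (fun ξ : EuclideanSpace ℝ (Fin n) => g ξ ^ 2 - 2 * c * g ξ)
        ((μH[(n:ℝ)-1]).restrict (sphere (0:E) 1)) := by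
      exact (integrableOn_sphere hfin (hg.pow 2)).sub
        ((integrableOn_sphere hfin hg).const_mul (2*c))
    have hfin' : ((μH[(n:ℝ)-1]).restrict (sphere (0:E) 1)) Set.univ < ⊤ := by
      rw [Measure.restrict_apply_univ]; exact hfin
    have hint2 : Integrable (fun _ : EuclideanSpace ℝ (Fin n) => c ^ 2)
        ((μH[(n:ℝ)-1]).restrict (sphere (0:E) 1)) := integrable_const_iff.2 (Or.inr ⟨hfin'⟩)
    rw [integral_add hint1 hint2, integral_sub (integrableOn_sphere (f := fun ξ => g ξ ^ 2) hfin (hg.pow 2))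
        ((integrableOn_sphere hfin hg).const_mul (2*c)), integral_const_mul, setIntegral_const]
    rw [smul_eq_mul, measureReal_def, ← hmdef, ← hA, ← hB]
    ring
  have hne : m ≠ 0 := hm.ne'
  have h1 : B - 2 * c * A + c ^ 2 * m = B - A ^ 2 / m := by
    rw [hc]
    field_simp
    ring
  rw [hexp, h1] at h0
  have h2 : A ^ 2 / m ≤ B := by linarith
  calc A ^ 2 = (A ^ 2 / m) * m := by field_simp
  _ ≤ B * m := mul_le_mul_of_nonneg_right h2 hm.le
  _ = m * B := mul_comm _ _

lemma P_lower (hn : 0 < n) (hfin : μH[(n:ℝ)-1] (sphere (0:E) 1) < ⊤)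
    (hm : 0 < (μH[(n:ℝ)-1] (sphere (0:E) 1)).toReal)
    {p q : EuclideanSpace ℝ (Fin n)} (hp : ‖p‖ = 1) (hq : ‖q‖ = 1) (hpq : ⟪p, q⟫ = 0) :
    (μH[(n:ℝ)-1] (sphere (0:E) 1)).toReal / (2 * n ^ 2)
      ≤ ∫ ξ in sphere (0:E) 1, (⟪p, ξ⟫) ^ 2 * (⟪q, ξ⟫) ^ 2 ∂(μH[(n:ℝ)-1]) := by
  set m := (μH[(n:ℝ)-1] (sphere (0:E) 1)).toReal with hmdef
  have hs2 : Real.sqrt 2 ≠ 0 := by positivity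
  have hnpq : ‖p + q‖ ^ 2 = 2 := by
    rw [norm_add_sq_real, hpq, hp, hq]; norm_num
  have hnmq : ‖p - q‖ ^ 2 = 2 := by
    rw [norm_sub_sq_real, hpq, hp, hq]; norm_num
  set p' := (Real.sqrt 2)⁻¹ • (p + q) with hp'def
  set q' := (Real.sqrt 2)⁻¹ • (p - q) with hq'def
  have hnorm : ∀ x : EuclideanSpace ℝ (Fin n), ‖x‖ ^ 2 = 2 →
      ‖(Real.sqrt 2)⁻¹ • x‖ = 1 := by
    intro x hx
    rw [norm_smul]
    have hx' : ‖x‖ = Real.sqrt 2 := by rw [← Real.sqrt_sq (norm_nonneg x), hx]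
    rw [hx', Real.norm_eq_abs, abs_inv, abs_of_nonneg (Real.sqrt_nonneg 2),
      inv_mul_cancel₀ hs2]
  have hp'1 : ‖p'‖ = 1 := hnorm _ hnpq
  have hq'1 : ‖q'‖ = 1 := hnorm _ hnmq
  have e1 : ⟪p + q, p - q⟫ = 0 := by
    rw [inner_sub_right, inner_add_left, inner_add_left, real_inner_self_eq_norm_sq,
      real_inner_self_eq_norm_sq, hp, hq, real_inner_comm p q, hpq]
    ring
  have hp'q' : ⟪p', q'⟫ = 0 := by
    rw [hp'def, hq'def, real_inner_smul_left, real_inner_smul_right, e1]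
    ring
  obtain ⟨R, hRp, hRq⟩ := exists_isometry_pair hp'1 hq'1 hp'q' hp hq hpq
  have hPP' : ∫ ξ in sphere (0:E) 1, (⟪p', ξ⟫) ^ 2 * (⟪q', ξ⟫) ^ 2 ∂(μH[(n:ℝ)-1])
      = ∫ ξ in sphere (0:E) 1, (⟪p, ξ⟫) ^ 2 * (⟪q, ξ⟫) ^ 2 ∂(μH[(n:ℝ)-1]) := by
    refine integral_sphere_congr_isometry R (fun ξ => (⟪p, ξ⟫) ^ 2 * (⟪q, ξ⟫) ^ 2)
      (fun ξ => (⟪p', ξ⟫) ^ 2 * (⟪q', ξ⟫) ^ 2) (fun ξ => ?_)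
    have e2 := R.inner_map_map p' ξ; rw [hRp] at e2
    have e3 := R.inner_map_map q' ξ; rw [hRq] at e3
    simp only [e2, e3]
  have e7 : ∀ X : ℝ, ((Real.sqrt 2)⁻¹ * X) ^ 2 = X ^ 2 / 2 := by
    intro X
    rw [mul_pow, inv_pow, Real.sq_sqrt (by norm_num : (0:ℝ) ≤ 2)]
    ring
  have hkey : ∀ ξ : EuclideanSpace ℝ (Fin n), (⟪p, ξ⟫) ^ 2 * (⟪q, ξ⟫) ^ 2
      = ((⟪p, ξ⟫ ^ 2 + ⟪q, ξ⟫ ^ 2) ^ 2) / 4 - (⟪p', ξ⟫) ^ 2 * (⟪q', ξ⟫) ^ 2 := by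
    intro ξ
    have e4 : ⟪p', ξ⟫ = (Real.sqrt 2)⁻¹ * (⟪p, ξ⟫ + ⟪q, ξ⟫) := by
      rw [hp'def, real_inner_smul_left, inner_add_left]
    have e5 : ⟪q', ξ⟫ = (Real.sqrt 2)⁻¹ * (⟪p, ξ⟫ - ⟪q, ξ⟫) := by
      rw [hq'def, real_inner_smul_left, inner_sub_left]
    rw [e4, e5, e7, e7]
    ring
  have hintPQ : IntegrableOn (fun ξ : EuclideanSpace ℝ (Fin n) =>
      ((⟪p, ξ⟫ ^ 2 + ⟪q, ξ⟫ ^ 2) ^ 2) / 4) (sphere (0:E) 1) (μH[(n:ℝ)-1]) :=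
    integrableOn_sphere hfin ((((contInner p).pow 2).add ((contInner q).pow 2)).pow 2 |>.div_const 4)
  have hintP' : IntegrableOn (fun ξ : EuclideanSpace ℝ (Fin n) =>
      (⟪p', ξ⟫) ^ 2 * (⟪q', ξ⟫) ^ 2) (sphere (0:E) 1) (μH[(n:ℝ)-1]) :=
    integrableOn_sphere hfin (((contInner p').pow 2).mul ((contInner q').pow 2))
  have hsplit : ∫ ξ in sphere (0:E) 1, (⟪p, ξ⟫) ^ 2 * (⟪q, ξ⟫) ^ 2 ∂(μH[(n:ℝ)-1])
      = (∫ ξ in sphere (0:E) 1, (⟪p, ξ⟫ ^ 2 + ⟪q, ξ⟫ ^ 2) ^ 2 ∂(μH[(n:ℝ)-1])) / 4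
        - ∫ ξ in sphere (0:E) 1, (⟪p', ξ⟫) ^ 2 * (⟪q', ξ⟫) ^ 2 ∂(μH[(n:ℝ)-1]) := by
    rw [← integral_div]
    rw [← integral_sub hintPQ hintP']
    exact setIntegral_congr_fun isClosed_sphere.measurableSet (fun ξ _ => hkey ξ)
  set Q := ∫ ξ in sphere (0:E) 1, (⟪p, ξ⟫ ^ 2 + ⟪q, ξ⟫ ^ 2) ^ 2 ∂(μH[(n:ℝ)-1]) with hQdef
  have hPval : ∫ ξ in sphere (0:E) 1, (⟪p, ξ⟫) ^ 2 * (⟪q, ξ⟫) ^ 2 ∂(μH[(n:ℝ)-1]) = Q / 8 := by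
    rw [hPP'] at hsplit
    linarith
  have hgsum : ∫ ξ in sphere (0:E) 1, (⟪p, ξ⟫ ^ 2 + ⟪q, ξ⟫ ^ 2) ∂(μH[(n:ℝ)-1])
      = 2 * m / n := by
    rw [integral_add (integrableOn_sphere (f := fun ξ => ⟪p, ξ⟫ ^ 2) hfin ((contInner p).pow 2))
      (integrableOn_sphere (f := fun ξ => ⟪q, ξ⟫ ^ 2) hfin ((contInner q).pow 2)),
      integral_inner_sq hn hfin, integral_inner_sq hn hfin, hp, hq]
    ring
  have hCS := cauchy_schwarz_integral hfin hm
    (g := fun ξ => ⟪p, ξ⟫ ^ 2 + ⟪q, ξ⟫ ^ 2)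
    (((contInner p).pow 2).add ((contInner q).pow 2))
  rw [hgsum] at hCS
  rw [hPval]
  have hn' : (0:ℝ) < n := by exact_mod_cast hn
  rw [div_le_div_iff₀ (by positivity) (by norm_num)]
  have h8 : (2 * m / n) ^ 2 = 4 * m ^ 2 / n ^ 2 := by field_simp; ring
  rw [h8] at hCS
  have h9 : 4 * m ^ 2 / n ^ 2 ≤ m * Q := hCS
  have h10 : 4 * m ^ 2 ≤ m * Q * n ^ 2 := by
    rw [div_le_iff₀ (by positivity)] at h9
    linarith
  nlinarith [hm, hn']

lemma hausdorff_pi_eq (m : ℕ) :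
    (μH[((m+1:ℕ):ℝ)-1] : Measure (Fin m → ℝ)) = volume := by
  have h : ((m+1:ℕ):ℝ)-1 = ((Fintype.card (Fin m) : ℕ) : ℝ) := by
    simp
  rw [h, hausdorffMeasure_pi_real]

lemma measure_sphere_pos (hn : 0 < n) :
    0 < μH[(n:ℝ)-1] (sphere (0:E) 1) := by
  obtain ⟨m, rfl⟩ := Nat.exists_eq_succ_of_ne_zero hn.ne'
  set d : ℝ := ((m+1:ℕ):ℝ)-1 with hd
  have hd0 : 0 ≤ d := by rw [hd]; push_cast; linarith
  -- the 1-Lipschitz projection forgetting the first coordinate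
  set π : EuclideanSpace ℝ (Fin (m+1)) → (Fin m → ℝ) := fun ξ k => ξ k.succ with hπdef
  have hπ : LipschitzWith 1 π := by
    apply LipschitzWith.of_dist_le_mul
    intro ξ η
    simp only [NNReal.coe_one, ENNReal.coe_one, one_mul]
    refine (dist_pi_le_iff dist_nonneg).2 fun k => ?_
    have h1 : |(ξ - η) k.succ| ≤ ‖ξ - η‖ := abs_coord_le_norm (ξ - η) k.succ
    rw [Real.dist_eq, dist_eq_norm]
    simpa using h1
  -- a small cube inside the image of the sphere
  set a : ℝ := 1/(m+1) with ha
  have ha0 : 0 < a := by positivity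
  set Q : Set (Fin m → ℝ) := Set.pi univ (fun _ => Icc (-a) a) with hQ
  have hQsub : Q ⊆ π '' (sphere (0:EuclideanSpace ℝ (Fin (m+1))) 1) := by
    intro y hy
    have hy' : ∀ k, |y k| ≤ a := by
      intro k
      have := hy k (mem_univ k)
      exact abs_le.2 ⟨this.1, this.2⟩
    have hsum : ∑ k, (y k)^2 ≤ 1 := by
      have h2 : ∀ k : Fin m, (y k)^2 ≤ a^2 := by
        intro k
        rw [← sq_abs]
        exact pow_le_pow_left₀ (abs_nonneg _) (hy' k) 2
      calc ∑ k, (y k)^2 ≤ ∑ _k : Fin m, a^2 := Finset.sum_le_sum (fun k _ => h2 k)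
      _ = m * a^2 := by rw [Finset.sum_const]; simp [mul_comm]
      _ ≤ 1 := by
          have hm1 : (0:ℝ) < ((m:ℝ)+1)^2 := by positivity
          rw [ha, div_pow, one_pow, mul_one_div, div_le_one hm1]
          nlinarith [(by positivity : (0:ℝ) ≤ (m:ℝ))]
    set s : ℝ := Real.sqrt (1 - ∑ k, (y k)^2) with hs
    have hs2 : s^2 = 1 - ∑ k, (y k)^2 := Real.sq_sqrt (by linarith)
    set ξ : EuclideanSpace ℝ (Fin (m+1)) := WithLp.toLp 2 (Fin.cons s y : Fin (m+1) → ℝ) with hξ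
    have hξnorm : ‖ξ‖ = 1 := by
      have h3 : ‖ξ‖^2 = 1 := by
        rw [norm_sq_eq_sum]
        rw [Fin.sum_univ_succ]
        have hc0 : ξ 0 = s := rfl
        have hcs : ∀ k : Fin m, ξ k.succ = y k := fun k => rfl
        simp only [hc0, hcs]
        rw [hs2]
        ring
      nlinarith [norm_nonneg ξ]
    refine ⟨ξ, ?_, ?_⟩
    · simpa [mem_sphere_iff_norm] using hξnorm
    · funext k
      rfl
  have hvol : 0 < (volume : Measure (Fin m → ℝ)) Q := by
    have hopen : IsOpen (Set.pi univ (fun _ : Fin m => Ioo (-a) a)) :=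
      isOpen_set_pi finite_univ (fun _ _ => isOpen_Ioo)
    have hne : (Set.pi univ (fun _ : Fin m => Ioo (-a) a)).Nonempty := by
      refine ⟨fun _ => 0, ?_⟩
      intro k _
      simp only [Set.mem_Ioo]
      constructor <;> linarith
    have h4 : 0 < (volume : Measure (Fin m → ℝ)) (Set.pi univ (fun _ => Ioo (-a) a)) :=
      hopen.measure_pos volume hne
    refine lt_of_lt_of_le h4 (measure_mono ?_)
    intro y hy k hk
    exact ⟨(hy k hk).1.le, (hy k hk).2.le⟩
  have himg := hπ.hausdorffMeasure_image_le hd0 (sphere (0:EuclideanSpace ℝ (Fin (m+1))) 1)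
  have h5 : (μH[d] : Measure (Fin m → ℝ)) Q ≤ μH[d] (π '' (sphere (0:EuclideanSpace ℝ (Fin (m+1))) 1)) :=
    measure_mono hQsub
  have h6 : (μH[d] : Measure (Fin m → ℝ)) Q = volume Q := by
    rw [← hd] at *
    rw [show (μH[d] : Measure (Fin m → ℝ)) = volume from hausdorff_pi_eq m]
  calc (0:ℝ≥0∞) < volume Q := hvol
  _ = (μH[d] : Measure (Fin m → ℝ)) Q := h6.symm
  _ ≤ μH[d] (π '' (sphere (0:EuclideanSpace ℝ (Fin (m+1))) 1)) := h5
  _ ≤ (1:ℝ≥0) ^ d * μH[d] (sphere (0:EuclideanSpace ℝ (Fin (m+1))) 1) := himg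
  _ = μH[d] (sphere (0:EuclideanSpace ℝ (Fin (m+1))) 1) := by
      rw [ENNReal.coe_one, ENNReal.one_rpow, one_mul]

lemma lipschitz_normalize_aux {F : Type*} [NormedAddCommGroup F] [NormedSpace ℝ F]
    {x y : F} (hx : 1 ≤ ‖x‖) (hy : 1 ≤ ‖y‖) :
    ‖‖x‖⁻¹ • x - ‖y‖⁻¹ • y‖ ≤ 2 * ‖x - y‖ := by
  have hx0 : (0:ℝ) < ‖x‖ := lt_of_lt_of_le one_pos hx
  have hy0 : (0:ℝ) < ‖y‖ := lt_of_lt_of_le one_pos hy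
  have h1 : ‖x‖⁻¹ • x - ‖y‖⁻¹ • y = ‖x‖⁻¹ • (x - y) + (‖x‖⁻¹ - ‖y‖⁻¹) • y := by
    rw [smul_sub, sub_smul]
    abel
  rw [h1]
  have h2 : ‖‖x‖⁻¹ • (x - y)‖ ≤ ‖x - y‖ := by
    rw [norm_smul, Real.norm_eq_abs, abs_inv, abs_of_pos hx0]
    calc ‖x‖⁻¹ * ‖x - y‖ ≤ 1 * ‖x - y‖ :=
      mul_le_mul_of_nonneg_right (by rw [inv_le_one_iff₀]; right; exact hx) (norm_nonneg _)
    _ = ‖x - y‖ := one_mul _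
  have h3 : ‖(‖x‖⁻¹ - ‖y‖⁻¹) • y‖ ≤ ‖x - y‖ := by
    rw [norm_smul, Real.norm_eq_abs]
    have h4 : ‖x‖⁻¹ - ‖y‖⁻¹ = (‖y‖ - ‖x‖) / (‖x‖ * ‖y‖) := by
      field_simp
    rw [h4, abs_div, abs_of_pos (by positivity : (0:ℝ) < ‖x‖ * ‖y‖)]
    rw [div_mul_eq_mul_div]
    have h5 : |‖y‖ - ‖x‖| * ‖y‖ ≤ ‖x - y‖ * (‖x‖ * ‖y‖) := by
      have h6 : |‖y‖ - ‖x‖| ≤ ‖y - x‖ := abs_norm_sub_norm_le y x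
      have h7 : ‖y - x‖ = ‖x - y‖ := norm_sub_rev y x
      calc |‖y‖ - ‖x‖| * ‖y‖ ≤ ‖x - y‖ * ‖y‖ := by
            rw [← h7]; exact mul_le_mul_of_nonneg_right h6 (norm_nonneg _)
      _ ≤ ‖x - y‖ * (‖x‖ * ‖y‖) := by
            have : ‖y‖ ≤ ‖x‖ * ‖y‖ := by nlinarith
            exact mul_le_mul_of_nonneg_left this (norm_nonneg _)
    rw [div_le_iff₀ (by positivity : (0:ℝ) < ‖x‖ * ‖y‖)]
    exact h5
  calc ‖‖x‖⁻¹ • (x - y) + (‖x‖⁻¹ - ‖y‖⁻¹) • y‖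
      ≤ ‖‖x‖⁻¹ • (x - y)‖ + ‖(‖x‖⁻¹ - ‖y‖⁻¹) • y‖ := norm_add_le _ _
  _ ≤ ‖x - y‖ + ‖x - y‖ := add_le_add h2 h3
  _ = 2 * ‖x - y‖ := by ring

lemma measure_sphere_lt_top (hn : 0 < n) :
    μH[(n:ℝ)-1] (sphere (0:E) 1) < ⊤ := by
  obtain ⟨m, rfl⟩ := Nat.exists_eq_succ_of_ne_zero hn.ne'
  set d : ℝ := ((m+1:ℕ):ℝ)-1 with hd
  have hd0 : 0 ≤ d := by rw [hd]; push_cast; linarith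
  set box : Set (Fin m → ℝ) := Set.pi univ (fun _ => Icc (-1:ℝ) 1) with hbox
  -- the 2(m+1)-Lipschitz parametrizations of the 2(m+1) "graph caps"
  set c : Bool → ℝ := fun σ => if σ then 1 else -1 with hc
  have hc1 : ∀ σ, |c σ| = 1 := by intro σ; cases σ <;> simp [hc]
  set g : Fin (m+1) → Bool → (Fin m → ℝ) → EuclideanSpace ℝ (Fin (m+1)) :=
    fun i σ y => WithLp.toLp 2 (Fin.insertNth i (c σ) y : Fin (m+1) → ℝ) with hg
  have hg1 : ∀ i σ y, 1 ≤ ‖g i σ y‖ := by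
    intro i σ y
    have h1 : |g i σ y i| ≤ ‖g i σ y‖ := abs_coord_le_norm _ i
    have h2 : g i σ y i = c σ := by
      simp [hg]
    rw [h2, hc1 σ] at h1
    exact h1
  have hgLip : ∀ i σ y z, ‖g i σ y - g i σ z‖ ≤ (m+1:ℝ) * dist y z := by
    intro i σ y z
    have hdist0 : 0 ≤ dist y z := dist_nonneg
    have h1 : ‖g i σ y - g i σ z‖^2 ≤ ((m+1:ℝ) * dist y z)^2 := by
      rw [norm_sq_eq_sum]
      have h2 : ∀ j, (g i σ y - g i σ z) j = g i σ y j - g i σ z j := fun j => rfl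
      simp only [h2]
      rw [Fin.sum_univ_succAbove _ i]
      have h3 : g i σ y i - g i σ z i = 0 := by
        simp only [hg]
        rw [Fin.insertNth_apply_same, Fin.insertNth_apply_same, sub_self]
      have h4 : ∀ k : Fin m, g i σ y (i.succAbove k) - g i σ z (i.succAbove k)
          = y k - z k := by
        intro k
        simp only [hg]
        rw [Fin.insertNth_apply_succAbove, Fin.insertNth_apply_succAbove]
      rw [h3]
      simp only [h4]
      have h5 : ∀ k : Fin m, (y k - z k)^2 ≤ (dist y z)^2 := by
        intro k
        have := dist_le_pi_dist y z k
        rw [Real.dist_eq] at this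
        calc (y k - z k)^2 = |y k - z k|^2 := (sq_abs _).symm
        _ ≤ (dist y z)^2 := pow_le_pow_left₀ (abs_nonneg _) this 2
      calc (0:ℝ)^2 + ∑ k, (y k - z k)^2 ≤ (0:ℝ)^2 + ∑ _k : Fin m, (dist y z)^2 := by
            have := Finset.sum_le_sum (fun k (_ : k ∈ Finset.univ) => h5 k)
            linarith
      _ ≤ ((m+1:ℝ) * dist y z)^2 := by
            rw [Finset.sum_const, Finset.card_univ, Fintype.card_fin, nsmul_eq_mul]
            have hm0 : (0:ℝ) ≤ (m:ℝ) := by positivity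
            nlinarith [sq_nonneg (dist y z), hdist0, hm0]
    nlinarith [norm_nonneg (g i σ y - g i σ z), (by positivity : (0:ℝ) ≤ (m+1:ℝ) * dist y z)]
  set φ : Fin (m+1) → Bool → (Fin m → ℝ) → EuclideanSpace ℝ (Fin (m+1)) :=
    fun i σ y => ‖g i σ y‖⁻¹ • g i σ y with hφ
  have hφLip : ∀ i σ, LipschitzWith (2*(m+1) : ℝ≥0) (φ i σ) := by
    intro i σ
    apply LipschitzWith.of_dist_le_mul
    intro y z
    rw [dist_eq_norm]
    calc ‖φ i σ y - φ i σ z‖ ≤ 2 * ‖g i σ y - g i σ z‖ :=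
      lipschitz_normalize_aux (hg1 i σ y) (hg1 i σ z)
    _ ≤ 2 * ((m+1:ℝ) * dist y z) := by
        have := hgLip i σ y z
        nlinarith
    _ = ((2*(m+1) : ℝ≥0) : ℝ) * dist y z := by push_cast; ring
  -- the sphere is covered by the images of the box
  have hcover : sphere (0:EuclideanSpace ℝ (Fin (m+1))) 1
      ⊆ ⋃ p : Fin (m+1) × Bool, φ p.1 p.2 '' box := by
    intro ξ hξ
    have hξ1 : ‖ξ‖ = 1 := by simpa [mem_sphere_iff_norm] using hξ
    obtain ⟨i, -, hi⟩ := Finset.exists_max_image Finset.univ (fun j => |ξ j|)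
      ⟨0, Finset.mem_univ 0⟩
    have hi' : ∀ j, |ξ j| ≤ |ξ i| := fun j => hi j (Finset.mem_univ j)
    have hipos : 0 < |ξ i| := by
      by_contra h
      push_neg at h
      have h0 : ∀ j, ξ j = 0 := by
        intro j
        have := le_trans (hi' j) h
        exact abs_eq_zero.1 (le_antisymm this (abs_nonneg _))
      have : ‖ξ‖^2 = 0 := by
        rw [norm_sq_eq_sum]
        apply Finset.sum_eq_zero
        intro j _
        rw [h0 j]; ring
      rw [hξ1] at this; norm_num at this
    set σ : Bool := decide (0 < ξ i) with hσ
    have hcpos : 0 < c σ * ξ i ∧ c σ * ξ i = |ξ i| := by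
      rcases lt_trichotomy (ξ i) 0 with hneg | hzero | hpos
      · have : σ = false := by simp [hσ, not_lt.2 hneg.le, decide_eq_false]
        rw [this]
        constructor
        · simp [hc]; linarith
        · simp [hc]; rw [abs_of_neg hneg]
      · rw [hzero, abs_zero] at hipos; norm_num at hipos
      · have : σ = true := by simp [hσ, hpos]
        rw [this]
        constructor
        · simp [hc]; linarith
        · simp [hc]; rw [abs_of_pos hpos]
    set r : ℝ := c σ * ξ i with hr
    have hr0 : 0 < r := hcpos.1
    set y : Fin m → ℝ := fun k => ξ (i.succAbove k) / r with hy
    have hybox : y ∈ box := by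
      intro k _
      have h8 : |y k| ≤ 1 := by
        rw [hy]
        rw [abs_div, abs_of_pos hr0]
        rw [div_le_one hr0]
        rw [hcpos.2]
        exact hi' _
      exact ⟨neg_le_of_abs_le h8, le_of_abs_le h8⟩
    refine mem_iUnion.2 ⟨⟨i, σ⟩, ⟨y, hybox, ?_⟩⟩
    have hgy : g i σ y = r⁻¹ • ξ := by
      ext j
      refine Fin.succAboveCases i ?_ ?_ j
      · simp only [hg]
        rw [Fin.insertNth_apply_same]
        have happ : (r⁻¹ • ξ) i = r⁻¹ * ξ i := rfl
        rw [happ]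
        have hcσ : c σ * c σ = 1 := by cases σ <;> simp [hc]
        have key : c σ * r = ξ i := by
          rw [hr, ← mul_assoc, hcσ, one_mul]
        rw [← key]
        field_simp
      · intro k
        simp only [hg]
        rw [Fin.insertNth_apply_succAbove]
        have : (r⁻¹ • ξ) (i.succAbove k) = r⁻¹ * ξ (i.succAbove k) := rfl
        rw [this, hy]
        ring
    have hgnorm : ‖g i σ y‖ = r⁻¹ := by
      rw [hgy, norm_smul, Real.norm_eq_abs, abs_inv, abs_of_pos hr0, hξ1, mul_one]
    show ‖g i σ y‖⁻¹ • g i σ y = ξ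
    rw [hgnorm, hgy, smul_smul, inv_inv, mul_inv_cancel₀ hr0.ne', one_smul]
  -- conclude by summing the finitely many Lipschitz images
  have hboxfin : (μH[d] : Measure (Fin m → ℝ)) box < ⊤ := by
    rw [show (μH[d] : Measure (Fin m → ℝ)) = volume from hausdorff_pi_eq m]
    exact (isCompact_univ_pi (fun _ => isCompact_Icc)).measure_lt_top
  have himg : ∀ p : Fin (m+1) × Bool, μH[d] (φ p.1 p.2 '' box)
      < ⊤ := by
    intro p
    refine lt_of_le_of_lt ((hφLip p.1 p.2).hausdorffMeasure_image_le hd0 box) ?_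
    exact ENNReal.mul_lt_top (ENNReal.rpow_lt_top_of_nonneg hd0 ENNReal.coe_ne_top) hboxfin
  calc μH[d] (sphere (0:EuclideanSpace ℝ (Fin (m+1))) 1)
      ≤ μH[d] (⋃ p : Fin (m+1) × Bool, φ p.1 p.2 '' box) := measure_mono hcover
  _ ≤ ∑' p : Fin (m+1) × Bool, μH[d] (φ p.1 p.2 '' box) := measure_iUnion_le _
  _ = ∑ p : Fin (m+1) × Bool, μH[d] (φ p.1 p.2 '' box) := tsum_fintype _
  _ < ⊤ := ENNReal.sum_lt_top.2 (fun p _ => himg p)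

lemma min_mul_aux {A s : ℝ} (hA : 0 ≤ A) (hs : 0 ≤ s) (hs1 : s ≤ 1) :
    min A 1 * s ≤ min (A*s) 1 := by
  rcases le_total A 1 with h | h
  · have h1 : A * s ≤ 1 := by nlinarith
    rw [min_eq_left h, min_eq_left h1]
  · rw [min_eq_right h, one_mul]
    refine le_min ?_ hs1
    nlinarith

end

end Stmt12Aux

open MeasureTheory Metric Set Stmt12Aux
open scoped RealInnerProductSpace

set_option maxHeartbeats 1000000 in
/-- The two-sided dimensional estimate used in the proof of Theorem 3.1: there exist
`0 < c ≤ C` such that for every `v ∈ ℝⁿ` and unit vector `ν`,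
`c·min(|v|,1) ≤ ∫_{S^{n-1}} min(|v·ξ|,1)|ν·ξ| dH^{n-1}(ξ) ≤ C·min(|v|,1)`. -/
theorem stmt12 (n : ℕ) (hn : 0 < n) :
    ∃ c C : ℝ, 0 < c ∧ c ≤ C ∧
      ∀ v ν : EuclideanSpace ℝ (Fin n), ‖ν‖ = 1 →
        c * min ‖v‖ 1 ≤ (∫ ξ in Metric.sphere (0 : EuclideanSpace ℝ (Fin n)) 1,
            min |(inner ℝ v ξ : ℝ)| 1 * |(inner ℝ ν ξ : ℝ)| ∂(μH[(n : ℝ) - 1])) ∧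
        (∫ ξ in Metric.sphere (0 : EuclideanSpace ℝ (Fin n)) 1,
            min |(inner ℝ v ξ : ℝ)| 1 * |(inner ℝ ν ξ : ℝ)| ∂(μH[(n : ℝ) - 1]))
          ≤ C * min ‖v‖ 1 := by
  classical
  have hfin := measure_sphere_lt_top hn
  have hpos := measure_sphere_pos hn
  set m : ℝ := (μH[(n:ℝ)-1] (sphere (0:EuclideanSpace ℝ (Fin n)) 1)).toReal with hmdef
  have hm0 : 0 < m := ENNReal.toReal_pos hpos.ne' hfin.ne
  have hn1 : (1:ℝ) ≤ (n:ℝ) := by exact_mod_cast hn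
  have hnR : (0:ℝ) < (n:ℝ) := by linarith
  refine ⟨3*m/(8*(n:ℝ)^2), m, by positivity, ?_, ?_⟩
  · rw [div_le_iff₀ (by positivity)]
    nlinarith [mul_le_mul_of_nonneg_left (show (3:ℝ) ≤ 8*(n:ℝ)^2 by nlinarith) hm0.le]
  intro v ν hν
  have hmeasS : MeasurableSet (sphere (0:EuclideanSpace ℝ (Fin n)) 1) :=
    isClosed_sphere.measurableSet
  have hξnorm : ∀ ξ ∈ sphere (0:EuclideanSpace ℝ (Fin n)) 1, ‖ξ‖ = 1 :=
    fun ξ hξ => mem_sphere_norm hξ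
  have habs_le : ∀ (w : EuclideanSpace ℝ (Fin n)), ∀ ξ ∈ sphere (0:EuclideanSpace ℝ (Fin n)) 1,
      |⟪w, ξ⟫| ≤ ‖w‖ := by
    intro w ξ hξ
    calc |⟪w, ξ⟫| ≤ ‖w‖ * ‖ξ‖ := abs_real_inner_le_norm w ξ
    _ = ‖w‖ := by rw [hξnorm ξ hξ, mul_one]
  have hcontF : Continuous fun ξ : EuclideanSpace ℝ (Fin n) =>
      min |⟪v, ξ⟫| 1 * |⟪ν, ξ⟫| :=
    (((contInner v).abs).min continuous_const).mul ((contInner ν).abs)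
  have hintF : IntegrableOn (fun ξ : EuclideanSpace ℝ (Fin n) =>
      min |⟪v, ξ⟫| 1 * |⟪ν, ξ⟫|) (sphere (0:EuclideanSpace ℝ (Fin n)) 1) (μH[(n:ℝ)-1]) :=
    integrableOn_sphere hfin hcontF
  have hintconst : IntegrableOn (fun _ : EuclideanSpace ℝ (Fin n) => min ‖v‖ 1)
      (sphere (0:EuclideanSpace ℝ (Fin n)) 1) (μH[(n:ℝ)-1]) := by
    refine integrableOn_const hfin.ne
  constructor
  · -- lower bound
    by_cases hv : v = 0
    · have h0 : min ‖v‖ 1 = 0 := by rw [hv]; simp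
      rw [h0, mul_zero]
      refine setIntegral_nonneg hmeasS (fun ξ _ => ?_)
      have h1 : (0:ℝ) ≤ min |⟪v, ξ⟫| 1 := le_min (abs_nonneg _) zero_le_one
      positivity
    · set e : EuclideanSpace ℝ (Fin n) := ‖v‖⁻¹ • v with he_def
      have he : ‖e‖ = 1 := norm_smul_inv_norm hv
      have hv0 : (0:ℝ) < ‖v‖ := norm_pos_iff.2 hv
      have habs : ∀ ξ : EuclideanSpace ℝ (Fin n), |⟪v, ξ⟫| = ‖v‖ * |⟪e, ξ⟫| := by
        intro ξ
        rw [he_def, real_inner_smul_left, abs_mul, abs_inv, abs_of_pos hv0]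
        field_simp
      set J : ℝ := ∫ ξ in sphere (0:EuclideanSpace ℝ (Fin n)) 1,
        |⟪e, ξ⟫| * |⟪ν, ξ⟫| ∂(μH[(n:ℝ)-1]) with hJdef
      have hintJ : IntegrableOn (fun ξ : EuclideanSpace ℝ (Fin n) => |⟪e, ξ⟫| * |⟪ν, ξ⟫|)
          (sphere (0:EuclideanSpace ℝ (Fin n)) 1) (μH[(n:ℝ)-1]) :=
        integrableOn_sphere hfin (((contInner e).abs).mul ((contInner ν).abs))
      -- Step 1 : min ‖v‖ 1 * J ≤ ∫ F
      have hstep1 : min ‖v‖ 1 * J ≤ ∫ ξ in sphere (0:EuclideanSpace ℝ (Fin n)) 1,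
          min |⟪v, ξ⟫| 1 * |⟪ν, ξ⟫| ∂(μH[(n:ℝ)-1]) := by
        rw [hJdef, ← integral_const_mul]
        refine setIntegral_mono_on (by exact (hintJ.const_mul _)) hintF hmeasS ?_
        intro ξ hξ
        have h2 : min ‖v‖ 1 * |⟪e, ξ⟫| ≤ min |⟪v, ξ⟫| 1 := by
          rw [habs ξ]
          exact min_mul_aux (norm_nonneg v) (abs_nonneg _)
            (by rw [← he]; exact habs_le e ξ hξ)
        calc min ‖v‖ 1 * (|⟪e, ξ⟫| * |⟪ν, ξ⟫|) = (min ‖v‖ 1 * |⟪e, ξ⟫|) * |⟪ν, ξ⟫| := by ring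
        _ ≤ min |⟪v, ξ⟫| 1 * |⟪ν, ξ⟫| := mul_le_mul_of_nonneg_right h2 (abs_nonneg _)
      -- Step 2 : 3m/(8n²) ≤ J
      have hstep2 : 3*m/(8*(n:ℝ)^2) ≤ J := by
        set t : ℝ := ⟪e, ν⟫ with ht_def
        rcases le_or_gt (1/2 : ℝ) |t| with hT | hT
        · -- large overlap: use |∫ ab| ≤ J
          have hpt : ∀ ξ : EuclideanSpace ℝ (Fin n),
              ‖⟪e, ξ⟫ * ⟪ν, ξ⟫‖ = |⟪e, ξ⟫| * |⟪ν, ξ⟫| := by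
            intro ξ; rw [Real.norm_eq_abs, abs_mul]
          have h3 : |∫ ξ in sphere (0:EuclideanSpace ℝ (Fin n)) 1,
              ⟪e, ξ⟫ * ⟪ν, ξ⟫ ∂(μH[(n:ℝ)-1])| ≤ J := by
            rw [← Real.norm_eq_abs]
            refine le_trans (norm_integral_le_integral_norm _) (le_of_eq ?_)
            rw [hJdef]
            exact setIntegral_congr_fun hmeasS (fun ξ _ => hpt ξ)
          rw [integral_inner_mul hn hfin e ν, ← ht_def, ← hmdef] at h3
          have h4 : |t| * (m / n) ≤ J := by
            rw [abs_mul, abs_of_nonneg (by positivity : (0:ℝ) ≤ m / (n:ℝ))] at h3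
            exact h3
          have h5 : 3*m/(8*(n:ℝ)^2) ≤ |t| * (m / n) := by
            rw [div_le_iff₀ (by positivity)]
            have h6 : (1/2) * (m/n) ≤ |t| * (m/n) :=
              mul_le_mul_of_nonneg_right hT (by positivity)
            have hrw : ((1/2) * (m/(n:ℝ))) * (8*(n:ℝ)^2) = 4*m*(n:ℝ) := by
              field_simp
              ring
            have h7 : 3*m ≤ ((1/2) * (m/n)) * (8*(n:ℝ)^2) := by
              rw [hrw]
              nlinarith [hm0.le, hn1, mul_le_mul_of_nonneg_left hn1 hm0.le]
            nlinarith [mul_le_mul_of_nonneg_right h6 (by positivity : (0:ℝ) ≤ 8*(n:ℝ)^2)]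
          linarith
        · -- nearly orthogonal: use the fourth moment bound
          have ht1 : |t| ≤ 1 := by
            rw [ht_def]
            calc |⟪e, ν⟫| ≤ ‖e‖ * ‖ν‖ := abs_real_inner_le_norm e ν
            _ = 1 := by rw [he, hν, mul_one]
          have hs2pos : (0:ℝ) < 1 - t^2 := by nlinarith [abs_nonneg t, sq_abs t]
          set sc : ℝ := Real.sqrt (1 - t^2) with hsc_def
          have hsc0 : 0 < sc := Real.sqrt_pos.2 hs2pos
          have hsc2 : sc^2 = 1 - t^2 := Real.sq_sqrt hs2pos.le
          have hnsub : ‖ν - t • e‖^2 = 1 - t^2 := by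
            rw [norm_sub_sq_real, norm_smul, hν, he]
            rw [real_inner_smul_right, real_inner_comm e ν, ← ht_def]
            rw [Real.norm_eq_abs, mul_one, sq_abs]
            ring
          set f : EuclideanSpace ℝ (Fin n) := sc⁻¹ • (ν - t • e) with hf_def
          have hf1 : ‖f‖ = 1 := by
            rw [hf_def, norm_smul, Real.norm_eq_abs, abs_inv, abs_of_pos hsc0]
            have : ‖ν - t • e‖ = sc := by
              rw [hsc_def, ← hnsub, Real.sqrt_sq (norm_nonneg _)]
            rw [this, inv_mul_cancel₀ hsc0.ne']
          have hef : ⟪e, f⟫ = 0 := by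
            rw [hf_def, real_inner_smul_right, inner_sub_right, real_inner_smul_right]
            rw [real_inner_self_eq_norm_sq, he, ← ht_def]
            ring
          have hdec : ∀ ξ : EuclideanSpace ℝ (Fin n),
              ⟪ν, ξ⟫ = t * ⟪e, ξ⟫ + sc * ⟪f, ξ⟫ := by
            intro ξ
            have hsf : sc • f = ν - t • e := by
              rw [hf_def, smul_smul, mul_inv_cancel₀ hsc0.ne', one_smul]
            have hν' : ν = t • e + sc • f := by rw [hsf]; abel
            conv_lhs => rw [hν']
            simp only [inner_add_left, real_inner_smul_left]
          -- J dominates the fourth-moment integral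
          have hintA : IntegrableOn (fun ξ : EuclideanSpace ℝ (Fin n) =>
              ⟪e, ξ⟫^2 * ⟪ν, ξ⟫^2) (sphere (0:EuclideanSpace ℝ (Fin n)) 1) (μH[(n:ℝ)-1]) :=
            integrableOn_sphere hfin (((contInner e).pow 2).mul ((contInner ν).pow 2))
          have hJ4 : ∫ ξ in sphere (0:EuclideanSpace ℝ (Fin n)) 1,
              ⟪e, ξ⟫^2 * ⟪ν, ξ⟫^2 ∂(μH[(n:ℝ)-1]) ≤ J := by
            rw [hJdef]
            refine setIntegral_mono_on hintA hintJ hmeasS ?_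
            intro ξ hξ
            have hae : |⟪e, ξ⟫| ≤ 1 := by rw [← he]; exact habs_le e ξ hξ
            have hbe : |⟪ν, ξ⟫| ≤ 1 := by rw [← hν]; exact habs_le ν ξ hξ
            have h8 : ⟪e, ξ⟫^2 ≤ |⟪e, ξ⟫| := by
              rw [← sq_abs]; nlinarith [abs_nonneg (⟪e, ξ⟫ : ℝ)]
            have h9 : ⟪ν, ξ⟫^2 ≤ |⟪ν, ξ⟫| := by
              rw [← sq_abs]; nlinarith [abs_nonneg (⟪ν, ξ⟫ : ℝ)]
            exact mul_le_mul h8 h9 (sq_nonneg _) (abs_nonneg _)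
          -- expand the fourth-moment integral
          have hintA4 : IntegrableOn (fun ξ : EuclideanSpace ℝ (Fin n) =>
              t^2 * ⟪e, ξ⟫^4) (sphere (0:EuclideanSpace ℝ (Fin n)) 1) (μH[(n:ℝ)-1]) :=
            (integrableOn_sphere hfin ((contInner e).pow 4)).const_mul _
          have hintA3 : IntegrableOn (fun ξ : EuclideanSpace ℝ (Fin n) =>
              (2*t*sc) * (⟪e, ξ⟫^3 * ⟪f, ξ⟫)) (sphere (0:EuclideanSpace ℝ (Fin n)) 1)
              (μH[(n:ℝ)-1]) :=
            (integrableOn_sphere hfin (((contInner e).pow 3).mul (contInner f))).const_mul _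
          have hintA2 : IntegrableOn (fun ξ : EuclideanSpace ℝ (Fin n) =>
              sc^2 * (⟪e, ξ⟫^2 * ⟪f, ξ⟫^2)) (sphere (0:EuclideanSpace ℝ (Fin n)) 1)
              (μH[(n:ℝ)-1]) :=
            (integrableOn_sphere hfin (((contInner e).pow 2).mul ((contInner f).pow 2))).const_mul _
          have hexp : ∫ ξ in sphere (0:EuclideanSpace ℝ (Fin n)) 1,
              ⟪e, ξ⟫^2 * ⟪ν, ξ⟫^2 ∂(μH[(n:ℝ)-1])
              = t^2 * (∫ ξ in sphere (0:EuclideanSpace ℝ (Fin n)) 1, ⟪e, ξ⟫^4 ∂(μH[(n:ℝ)-1]))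
                + (2*t*sc) * (∫ ξ in sphere (0:EuclideanSpace ℝ (Fin n)) 1,
                    ⟪e, ξ⟫^3 * ⟪f, ξ⟫ ∂(μH[(n:ℝ)-1]))
                + sc^2 * (∫ ξ in sphere (0:EuclideanSpace ℝ (Fin n)) 1,
                    ⟪e, ξ⟫^2 * ⟪f, ξ⟫^2 ∂(μH[(n:ℝ)-1])) := by
            have hpt : ∀ ξ ∈ sphere (0:EuclideanSpace ℝ (Fin n)) 1,
                ⟪e, ξ⟫^2 * ⟪ν, ξ⟫^2
                = t^2 * ⟪e, ξ⟫^4 + (2*t*sc) * (⟪e, ξ⟫^3 * ⟪f, ξ⟫)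
                  + sc^2 * (⟪e, ξ⟫^2 * ⟪f, ξ⟫^2) := by
              intro ξ _
              rw [hdec ξ]
              ring
            rw [setIntegral_congr_fun hmeasS hpt]
            have hintA43 : IntegrableOn (fun ξ : EuclideanSpace ℝ (Fin n) =>
                t^2 * ⟪e, ξ⟫^4 + (2*t*sc) * (⟪e, ξ⟫^3 * ⟪f, ξ⟫))
                (sphere (0:EuclideanSpace ℝ (Fin n)) 1) (μH[(n:ℝ)-1]) := by
              exact hintA4.add hintA3
            rw [integral_add hintA43 hintA2, integral_add hintA4 hintA3]
            rw [integral_const_mul, integral_const_mul, integral_const_mul]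
          have hcross : ∫ ξ in sphere (0:EuclideanSpace ℝ (Fin n)) 1,
              ⟪e, ξ⟫^3 * ⟪f, ξ⟫ ∂(μH[(n:ℝ)-1]) = 0 := cross_zero hfin hef 3
          have hM4 : 0 ≤ ∫ ξ in sphere (0:EuclideanSpace ℝ (Fin n)) 1,
              ⟪e, ξ⟫^4 ∂(μH[(n:ℝ)-1]) :=
            setIntegral_nonneg hmeasS (fun ξ _ => by positivity)
          have hP : m/(2*(n:ℝ)^2) ≤ ∫ ξ in sphere (0:EuclideanSpace ℝ (Fin n)) 1,
              ⟪e, ξ⟫^2 * ⟪f, ξ⟫^2 ∂(μH[(n:ℝ)-1]) := by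
            have := P_lower hn hfin hm0 he hf1 hef
            rwa [← hmdef] at this
          have hsc34 : (3/4 : ℝ) ≤ sc^2 := by
            rw [hsc2]
            nlinarith [sq_abs t, abs_nonneg t]
          have h10 : 3*m/(8*(n:ℝ)^2) ≤ ∫ ξ in sphere (0:EuclideanSpace ℝ (Fin n)) 1,
              ⟪e, ξ⟫^2 * ⟪ν, ξ⟫^2 ∂(μH[(n:ℝ)-1]) := by
            rw [hexp, hcross, mul_zero, add_zero]
            have h11 : (3/4) * (m/(2*(n:ℝ)^2)) ≤ sc^2 * (∫ ξ in sphere (0:EuclideanSpace ℝ (Fin n)) 1,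
                ⟪e, ξ⟫^2 * ⟪f, ξ⟫^2 ∂(μH[(n:ℝ)-1])) := by
              have h12 : (0:ℝ) ≤ m/(2*(n:ℝ)^2) := by positivity
              nlinarith [mul_le_mul hsc34 hP h12 (by nlinarith : (0:ℝ) ≤ sc^2)]
            have h13 : (3/4 : ℝ) * (m/(2*(n:ℝ)^2)) = 3*m/(8*(n:ℝ)^2) := by
              field_simp
              ring
            nlinarith [mul_nonneg (sq_nonneg t) hM4]
          linarith
      -- combine
      have hmin0 : (0:ℝ) ≤ min ‖v‖ 1 := le_min (norm_nonneg v) zero_le_one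
      calc 3*m/(8*(n:ℝ)^2) * min ‖v‖ 1 ≤ J * min ‖v‖ 1 :=
        mul_le_mul_of_nonneg_right hstep2 hmin0
      _ = min ‖v‖ 1 * J := mul_comm _ _
      _ ≤ _ := hstep1
  · -- upper bound
    have hb : ∀ ξ ∈ sphere (0:EuclideanSpace ℝ (Fin n)) 1,
        min |⟪v, ξ⟫| 1 * |⟪ν, ξ⟫| ≤ min ‖v‖ 1 := by
      intro ξ hξ
      have h1 : min |⟪v, ξ⟫| 1 ≤ min ‖v‖ 1 := min_le_min (habs_le v ξ hξ) le_rfl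
      have h2 : |⟪ν, ξ⟫| ≤ 1 := by rw [← hν]; exact habs_le ν ξ hξ
      have h3 : (0:ℝ) ≤ min |⟪v, ξ⟫| 1 := le_min (abs_nonneg _) zero_le_one
      calc min |⟪v, ξ⟫| 1 * |⟪ν, ξ⟫| ≤ min |⟪v, ξ⟫| 1 * 1 :=
        mul_le_mul_of_nonneg_left h2 h3
      _ = min |⟪v, ξ⟫| 1 := mul_one _
      _ ≤ min ‖v‖ 1 := h1
    calc (∫ ξ in sphere (0:EuclideanSpace ℝ (Fin n)) 1,
        min |⟪v, ξ⟫| 1 * |⟪ν, ξ⟫| ∂(μH[(n:ℝ)-1]))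
        ≤ ∫ _ξ in sphere (0:EuclideanSpace ℝ (Fin n)) 1, min ‖v‖ 1 ∂(μH[(n:ℝ)-1]) :=
          setIntegral_mono_on hintF hintconst hmeasS hb
    _ = m * min ‖v‖ 1 := by rw [setIntegral_const, smul_eq_mul, measureReal_def, ← hmdef]
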